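/- Let S be a 0-simple Tarski monoid, and let e and f be idempotents of S with e ≠ 1 and f ≠ 0. Then there is a unit g ∈ S such that g e g⁻¹ ≤ f. -/
import Mathlib


universe u

/-- An inverse monoid with zero: every element `a` has a unique generalized
inverse `a⁻¹`, and `0` is an absorbing element. -/
class InverseMonoidWithZero (S : Type u) extends Monoid S, Zero S, Inv S where
  zero_mul' : ∀ a : S, 0 * a = 0
  mul_zero' : ∀ a : S, a * 0 = 0
  mul_inv_mul : ∀ a : S, a * a⁻¹ * a = a
  inv_mul_inv : ∀ a : S, a⁻¹ * a * a⁻¹ = a⁻¹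
  inv_unique : ∀ a b : S, a * b * a = a → b * a * b = b → b = a⁻¹

section BasicDefs

variable {S : Type u}

/-- The natural partial order: `a ≤ b` iff `a = e * b` for some idempotent `e`. -/
def nle [InverseMonoidWithZero S] (a b : S) : Prop :=
  ∃ e : S, e * e = e ∧ a = e * b

/-- `a` and `b` are compatible if `a * b⁻¹` and `a⁻¹ * b` are idempotents. -/
def Compat [InverseMonoidWithZero S] (a b : S) : Prop :=
  (a * b⁻¹) * (a * b⁻¹) = a * b⁻¹ ∧ (a⁻¹ * b) * (a⁻¹ * b) = a⁻¹ * b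

/-- `a` and `b` are orthogonal if `a * b⁻¹ = 0` and `a⁻¹ * b = 0`. -/
def Orth [InverseMonoidWithZero S] (a b : S) : Prop :=
  a * b⁻¹ = 0 ∧ a⁻¹ * b = 0

end BasicDefs

/-- A distributive inverse monoid: every compatible pair has a join (for the
natural partial order), recorded by `sup`, and multiplication distributes over
these binary joins. -/
class DistributiveInverseMonoid (S : Type u) extends InverseMonoidWithZero S where
  sup : S → S → S
  le_sup_left : ∀ a b : S, Compat a b → nle a (sup a b)
  le_sup_right : ∀ a b : S, Compat a b → nle b (sup a b)
  sup_le : ∀ a b c : S, Compat a b → nle a c → nle b c → nle (sup a b) c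
  mul_sup : ∀ a b c : S, Compat a b → c * sup a b = sup (c * a) (c * b)
  sup_mul : ∀ a b c : S, Compat a b → sup a b * c = sup (a * c) (b * c)

/-- A Boolean inverse monoid: a distributive inverse monoid whose idempotents
form a Boolean algebra under the natural partial order; `compl` records the
complementation on idempotents. -/
class BooleanInverseMonoid (S : Type u) extends DistributiveInverseMonoid S where
  compl : S → S
  compl_idem : ∀ e : S, e * e = e → compl e * compl e = compl e
  mul_compl : ∀ e : S, e * e = e → e * compl e = 0
  sup_compl : ∀ e : S, e * e = e → sup e (compl e) = 1

/-- A Boolean inverse ∧-monoid: a Boolean inverse monoid in which every pair of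
elements has a meet with respect to the natural partial order. -/
class BooleanInverseMeetMonoid (S : Type u) extends BooleanInverseMonoid S where
  inf : S → S → S
  inf_le_left : ∀ a b : S, nle (inf a b) a
  inf_le_right : ∀ a b : S, nle (inf a b) b
  le_inf : ∀ a b c : S, nle c a → nle c b → nle c (inf a b)

section MoreDefs

variable {S : Type u}

/-- The join of a compatible pair. -/
def bsup [DistributiveInverseMonoid S] (a b : S) : S := DistributiveInverseMonoid.sup a b

/-- Complementation in the Boolean algebra of idempotents. -/
def bcompl [BooleanInverseMonoid S] (e : S) : S := BooleanInverseMonoid.compl e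

/-- The binary meet. -/
def binf [BooleanInverseMeetMonoid S] (a b : S) : S := BooleanInverseMeetMonoid.inf a b

/-- The fixed-point operator `φ(s) = s ∧ 1`. -/
def phi [BooleanInverseMeetMonoid S] (s : S) : S := binf s 1

/-- The support operator `σ(s) = \overline{φ(s)} ⋅ s⁻¹ s`. -/
def sigma [BooleanInverseMeetMonoid S] (s : S) : S := bcompl (phi s) * (s⁻¹ * s)

/-- An infinitesimal is a non-zero element that squares to zero. -/
def Infinitesimal [InverseMonoidWithZero S] (a : S) : Prop := a ≠ 0 ∧ a * a = 0

/-- A (two-sided) ideal. -/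
def IsMIdeal [InverseMonoidWithZero S] (I : Set S) : Prop :=
  I.Nonempty ∧ ∀ a ∈ I, ∀ s : S, s * a ∈ I ∧ a * s ∈ I

/-- A ∨-ideal: an ideal closed under joins of compatible pairs. -/
def IsVIdeal [DistributiveInverseMonoid S] (I : Set S) : Prop :=
  IsMIdeal I ∧ ∀ a ∈ I, ∀ b ∈ I, Compat a b → bsup a b ∈ I

end MoreDefs

/-- 0-simplifying: the only ∨-ideals are `{0}` and `S`. -/
def ZeroSimplifying (S : Type u) [DistributiveInverseMonoid S] : Prop :=
  ∀ I : Set S, IsVIdeal I → I = {0} ∨ I = Set.univ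

/-- 0-simple: non-trivial and the only ideals are `{0}` and `S`. -/
def ZeroSimple (S : Type u) [InverseMonoidWithZero S] : Prop :=
  (∃ s : S, s ≠ 0) ∧ ∀ I : Set S, IsMIdeal I → I = {0} ∨ I = Set.univ

/-- Fundamental: every element commuting with all idempotents is an idempotent. -/
def Fundamental (S : Type u) [InverseMonoidWithZero S] : Prop :=
  ∀ a : S, (∀ e : S, e * e = e → a * e = e * a) → a * a = a

/-- The Boolean algebra of idempotents is atomless. -/
def IdemAtomless (S : Type u) [InverseMonoidWithZero S] : Prop :=
  ∀ e : S, e * e = e → e ≠ 0 → ∃ f : S, f * f = f ∧ f ≠ 0 ∧ nle f e ∧ f ≠ e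

section Filters

variable {S : Type u}

/-- A filter in a Boolean inverse ∧-monoid: a nonempty subset closed under
binary meets and upward closed in the natural partial order. -/
def IsMFilter [BooleanInverseMeetMonoid S] (A : Set S) : Prop :=
  A.Nonempty ∧ (∀ a ∈ A, ∀ b ∈ A, binf a b ∈ A) ∧ ∀ a ∈ A, ∀ b : S, nle a b → b ∈ A

/-- An ultrafilter: a maximal proper filter. -/
def IsMUltrafilter [BooleanInverseMeetMonoid S] (A : Set S) : Prop :=
  IsMFilter A ∧ (0 : S) ∉ A ∧ ∀ B : Set S, IsMFilter B → (0 : S) ∉ B → A ⊆ B → A = B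

/-- A filter of the Boolean algebra of idempotents (meet of idempotents is
their product). -/
def IsIdemFilter [InverseMonoidWithZero S] (F : Set S) : Prop :=
  F.Nonempty ∧ (∀ e ∈ F, e * e = e) ∧ (∀ e ∈ F, ∀ f ∈ F, e * f ∈ F) ∧
    ∀ e ∈ F, ∀ f : S, f * f = f → nle e f → f ∈ F

/-- An ultrafilter of the Boolean algebra of idempotents. -/
def IsIdemUltrafilter [InverseMonoidWithZero S] (F : Set S) : Prop :=
  IsIdemFilter F ∧ (0 : S) ∉ F ∧
    ∀ G : Set S, IsIdemFilter G → (0 : S) ∉ G → F ⊆ G → F = G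

end Filters

section PencilDefs

variable {S : Type u}

/-- `Preceq e f`: there is a pencil from `e` to `f`, i.e. finitely many
elements `x₁, …, xₘ` with `r(xᵢ) ≤ f` for all `i` and `e = ⋁ d(xᵢ)`
(a least upper bound for the natural partial order). -/
def Preceq [DistributiveInverseMonoid S] (e f : S) : Prop :=
  ∃ l : List S, l ≠ [] ∧ (∀ x ∈ l, nle (x * x⁻¹) f) ∧
    (∀ x ∈ l, nle (x⁻¹ * x) e) ∧ ∀ c : S, (∀ x ∈ l, nle (x⁻¹ * x) c) → nle e c

/-- Piecewise factorizable: every element is a finite join of elements each of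
which lies beneath a unit. -/
def PiecewiseFactorizable (S : Type u) [DistributiveInverseMonoid S] : Prop :=
  ∀ s : S, ∃ l : List S, l ≠ [] ∧ (∀ x ∈ l, ∃ g : S, IsUnit g ∧ nle x g) ∧
    (∀ x ∈ l, nle x s) ∧ ∀ c : S, (∀ x ∈ l, nle x c) → nle s c

/-- A properly infinite idempotent. -/
def ProperlyInfinite [DistributiveInverseMonoid S] (e : S) : Prop :=
  ∃ x y : S, x⁻¹ * x = e ∧ y⁻¹ * y = e ∧ Orth (x * x⁻¹) (y * y⁻¹) ∧
    nle (bsup (x * x⁻¹) (y * y⁻¹)) e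

end PencilDefs

/-- Purely infinite: every non-zero idempotent is properly infinite. -/
def PurelyInfinite (S : Type u) [DistributiveInverseMonoid S] : Prop :=
  ∀ e : S, e * e = e → e ≠ 0 → ProperlyInfinite e

section InvLemmas

variable {S : Type u} [InverseMonoidWithZero S]

lemma imw_mul_inv_mul (a : S) : a * a⁻¹ * a = a := InverseMonoidWithZero.mul_inv_mul a
lemma imw_inv_mul_inv (a : S) : a⁻¹ * a * a⁻¹ = a⁻¹ := InverseMonoidWithZero.inv_mul_inv a
lemma imw_inv_unique {a b : S} (h1 : a * b * a = a) (h2 : b * a * b = b) : b = a⁻¹ :=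
  InverseMonoidWithZero.inv_unique a b h1 h2
lemma imw_zero_mul (a : S) : (0 : S) * a = 0 := InverseMonoidWithZero.zero_mul' a
lemma imw_mul_zero (a : S) : a * (0 : S) = 0 := InverseMonoidWithZero.mul_zero' a

lemma imw_inv_inv (a : S) : a⁻¹⁻¹ = a :=
  (imw_inv_unique (imw_inv_mul_inv a) (imw_mul_inv_mul a)).symm

lemma idem_inv {e : S} (he : e * e = e) : e⁻¹ = e := by
  have h : e * e * e = e := by rw [he, he]
  exact (imw_inv_unique h h).symm

lemma imw_zero_inv : (0 : S)⁻¹ = 0 := idem_inv (imw_mul_zero 0)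
lemma imw_one_inv : (1 : S)⁻¹ = 1 := idem_inv (mul_one 1)

lemma ridem (a : S) : (a * a⁻¹) * (a * a⁻¹) = a * a⁻¹ := by
  rw [show a * a⁻¹ * (a * a⁻¹) = a * a⁻¹ * a * a⁻¹ by simp [mul_assoc], imw_mul_inv_mul]

lemma didem (a : S) : (a⁻¹ * a) * (a⁻¹ * a) = a⁻¹ * a := by
  rw [show a⁻¹ * a * (a⁻¹ * a) = a⁻¹ * a * a⁻¹ * a by simp [mul_assoc], imw_inv_mul_inv]

lemma idem_mul_idem {e f : S} (he : e * e = e) (hf : f * f = f) :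
    (e * f) * (e * f) = e * f := by
  set x := (e * f)⁻¹ with hx
  have hfxe : f * x * e = x := by
    apply imw_inv_unique
    · calc e * f * (f * x * e) * (e * f)
          = e * (f * f) * x * (e * e) * f := by simp [mul_assoc]
        _ = e * f * x * (e * f) := by rw [he, hf]; simp [mul_assoc]
        _ = e * f := by simpa [mul_assoc] using imw_mul_inv_mul (e * f)
    · calc f * x * e * (e * f) * (f * x * e)
          = f * (x * ((e * e) * (f * f)) * x) * e := by simp [mul_assoc]
        _ = f * (x * (e * f) * x) * e := by rw [he, hf]
        _ = f * x * e := by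
            have := imw_inv_mul_inv (e * f)
            rw [← hx] at this
            rw [show x * (e * f) * x = x from by simpa [mul_assoc] using this]
  have hxe : x * e = x := by
    conv_lhs => rw [← hfxe]
    calc f * x * e * e = f * x * (e * e) := by simp [mul_assoc]
      _ = f * x * e := by rw [he]
      _ = x := hfxe
  have hfx : f * x = x := by
    conv_lhs => rw [← hfxe]
    calc f * (f * x * e) = (f * f) * x * e := by simp [mul_assoc]
      _ = f * x * e := by rw [hf]
      _ = x := hfxe
  have hxx : x * x = x := by
    calc x * x = (x * e) * (f * x) := by rw [hxe, hfx]
      _ = x * (e * f) * x := by simp [mul_assoc]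
      _ = x := by simpa [mul_assoc] using imw_inv_mul_inv (e * f)
  have : e * f = x := by
    rw [show e * f = ((e * f)⁻¹)⁻¹ from (imw_inv_inv (e * f)).symm, ← hx, idem_inv hxx]
  rw [this]; exact hxx

lemma idem_comm {e f : S} (he : e * e = e) (hf : f * f = f) : e * f = f * e := by
  have hef : (e * f) * (e * f) = e * f := idem_mul_idem he hf
  have hfe : (f * e) * (f * e) = f * e := idem_mul_idem hf he
  have h1 : (e * f) * (f * e) * (e * f) = e * f := by
    calc (e * f) * (f * e) * (e * f)
        = e * (f * f) * (e * e) * f := by simp [mul_assoc]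
      _ = (e * f) * (e * f) := by rw [he, hf]; simp [mul_assoc]
      _ = e * f := hef
  have h2 : (f * e) * (e * f) * (f * e) = f * e := by
    calc (f * e) * (e * f) * (f * e)
        = f * (e * e) * (f * f) * e := by simp [mul_assoc]
      _ = (f * e) * (f * e) := by rw [he, hf]; simp [mul_assoc]
      _ = f * e := hfe
  have : f * e = (e * f)⁻¹ := imw_inv_unique h1 h2
  rw [this, idem_inv hef]

lemma imw_mul_inv_rev (a b : S) : (a * b)⁻¹ = b⁻¹ * a⁻¹ := by
  have hd : (b * b⁻¹) * (a⁻¹ * a) = (a⁻¹ * a) * (b * b⁻¹) := idem_comm (ridem b) (didem a)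
  symm
  apply imw_inv_unique
  · calc a * b * (b⁻¹ * a⁻¹) * (a * b)
        = a * ((b * b⁻¹) * (a⁻¹ * a)) * b := by simp [mul_assoc]
      _ = a * ((a⁻¹ * a) * (b * b⁻¹)) * b := by rw [hd]
      _ = (a * a⁻¹ * a) * (b * b⁻¹ * b) := by simp [mul_assoc]
      _ = a * b := by rw [imw_mul_inv_mul, imw_mul_inv_mul]
  · calc b⁻¹ * a⁻¹ * (a * b) * (b⁻¹ * a⁻¹)
        = b⁻¹ * ((a⁻¹ * a) * (b * b⁻¹)) * a⁻¹ := by simp [mul_assoc]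
      _ = b⁻¹ * ((b * b⁻¹) * (a⁻¹ * a)) * a⁻¹ := by rw [hd]
      _ = (b⁻¹ * b * b⁻¹) * (a⁻¹ * a * a⁻¹) := by simp [mul_assoc]
      _ = b⁻¹ * a⁻¹ := by rw [imw_inv_mul_inv, imw_inv_mul_inv]

end InvLemmas

section NleLemmas

variable {S : Type u} [InverseMonoidWithZero S]

lemma nle_refl (a : S) : nle a a := ⟨a * a⁻¹, ridem a, (imw_mul_inv_mul a).symm⟩

lemma nle_of_eq {a b : S} (h : a = b) : nle a b := h ▸ nle_refl a

lemma nle_left_char {a b : S} (h : nle a b) : a = (a * a⁻¹) * b := by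
  obtain ⟨i, hi, hab⟩ := h
  have key : (i * b) * (i * b)⁻¹ * b = i * b := by
    calc (i * b) * (i * b)⁻¹ * b
        = i * b * (b⁻¹ * i) * b := by rw [imw_mul_inv_rev, idem_inv hi]
      _ = i * ((b * b⁻¹) * i) * b := by simp only [mul_assoc]
      _ = i * (i * (b * b⁻¹)) * b := by rw [idem_comm (ridem b) hi]
      _ = (i * i) * (b * b⁻¹ * b) := by simp only [mul_assoc]
      _ = i * b := by rw [hi, imw_mul_inv_mul]
  rw [hab]; exact key.symm

lemma nle_of_left_char {a b : S} (h : a = (a * a⁻¹) * b) : nle a b := ⟨a * a⁻¹, ridem a, h⟩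

lemma nle_ran_absorb {a b : S} (h : nle a b) : (b * b⁻¹) * a = a := by
  have h1 : a = (a * a⁻¹) * b := nle_left_char h
  calc (b * b⁻¹) * a = (b * b⁻¹) * ((a * a⁻¹) * b) := by conv_lhs => rw [h1]
    _ = ((b * b⁻¹) * (a * a⁻¹)) * b := by simp only [mul_assoc]
    _ = ((a * a⁻¹) * (b * b⁻¹)) * b := by rw [idem_comm (ridem b) (ridem a)]
    _ = (a * a⁻¹) * (b * b⁻¹ * b) := by simp only [mul_assoc]
    _ = (a * a⁻¹) * b := by rw [imw_mul_inv_mul]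
    _ = a := h1.symm

lemma nle_inv_left_char {a b : S} (h : nle a b) : a⁻¹ = b⁻¹ * (a * a⁻¹) := by
  have h1 : a = (a * a⁻¹) * b := nle_left_char h
  conv_lhs => rw [h1]
  rw [imw_mul_inv_rev, idem_inv (ridem a)]

lemma nle_right_char {a b : S} (h : nle a b) : a = b * (a⁻¹ * a) := by
  have hainv : a⁻¹ = b⁻¹ * (a * a⁻¹) := nle_inv_left_char h
  have : b * (a⁻¹ * a) = a := by
    calc b * (a⁻¹ * a) = b * ((b⁻¹ * (a * a⁻¹)) * a) := by conv_lhs => rw [hainv]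
      _ = (b * b⁻¹) * ((a * a⁻¹) * a) := by simp only [mul_assoc]
      _ = (b * b⁻¹) * (a * a⁻¹ * a) := by simp only [mul_assoc]
      _ = (b * b⁻¹) * a := by rw [imw_mul_inv_mul]
      _ = a := nle_ran_absorb h
  exact this.symm

lemma nle_of_right_char {a b j : S} (hj : j * j = j) (h : a = b * j) : nle a b := by
  refine ⟨b * j * b⁻¹, ?_, ?_⟩
  · calc b * j * b⁻¹ * (b * j * b⁻¹)
        = b * ((j * (b⁻¹ * b)) * j) * b⁻¹ := by simp only [mul_assoc]
      _ = b * (((b⁻¹ * b) * j) * j) * b⁻¹ := by rw [idem_comm hj (didem b)]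
      _ = b * ((b⁻¹ * b) * (j * j)) * b⁻¹ := by simp only [mul_assoc]
      _ = b * ((b⁻¹ * b) * j) * b⁻¹ := by rw [hj]
      _ = (b * (b⁻¹ * b)) * (j * b⁻¹) := by simp only [mul_assoc]
      _ = (b * b⁻¹ * b) * (j * b⁻¹) := by simp only [mul_assoc]
      _ = b * (j * b⁻¹) := by rw [imw_mul_inv_mul]
      _ = b * j * b⁻¹ := by simp only [mul_assoc]
  · calc a = b * j := h
      _ = (b * b⁻¹ * b) * j := by rw [imw_mul_inv_mul]
      _ = b * ((b⁻¹ * b) * j) := by simp only [mul_assoc]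
      _ = b * (j * (b⁻¹ * b)) := by rw [idem_comm (didem b) hj]
      _ = (b * j * b⁻¹) * b := by simp only [mul_assoc]

lemma nle_trans {a b c : S} (h1 : nle a b) (h2 : nle b c) : nle a c := by
  obtain ⟨i, hi, hab⟩ := h1
  obtain ⟨j, hj, hbc⟩ := h2
  exact ⟨i * j, idem_mul_idem hi hj, by rw [hab, hbc, mul_assoc]⟩

lemma nle_antisymm {a b : S} (h1 : nle a b) (h2 : nle b a) : a = b := by
  calc a = (a * a⁻¹) * b := nle_left_char h1
    _ = b := nle_ran_absorb h2

lemma nle_zero (a : S) : nle 0 a := ⟨0, by rw [imw_mul_zero], (imw_zero_mul a).symm⟩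

lemma eq_one_of_one_nle {x : S} (h : nle (1 : S) x) : x = 1 := by
  have := nle_left_char h
  rw [imw_one_inv, mul_one, one_mul] at this
  exact this.symm

lemma nle_mul_left {a b : S} (c : S) (h : nle a b) : nle (c * a) (c * b) := by
  have h1 : a = b * (a⁻¹ * a) := nle_right_char h
  exact nle_of_right_char (didem a) (by rw [mul_assoc, ← h1])

lemma nle_mul_right {a b : S} (c : S) (h : nle a b) : nle (a * c) (b * c) := by
  obtain ⟨i, hi, hab⟩ := h
  exact ⟨i, hi, by rw [hab, mul_assoc]⟩

lemma nle_inv {a b : S} (h : nle a b) : nle a⁻¹ b⁻¹ := by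
  have h1 : a = b * (a⁻¹ * a) := nle_right_char h
  refine ⟨a⁻¹ * a, didem a, ?_⟩
  conv_lhs => rw [h1]
  rw [imw_mul_inv_rev, idem_inv (didem a)]

lemma idem_nle_of_absorb {i j : S} (hi : i * i = i) (h : i * j = i) : nle i j :=
  ⟨i, hi, h.symm⟩

lemma idem_nle_absorb {i j : S} (hi : i * i = i) (hj : j * j = j) (h : nle i j) :
    i * j = i := by
  have h1 : i = j * (i⁻¹ * i) := nle_right_char h
  rw [idem_inv hi, hi] at h1
  rw [idem_comm hi hj]; exact h1.symm

lemma idem_absorb_left {i j : S} (hi : i * i = i) (hj : j * j = j) (h : nle i j) :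
    j * i = i := by rw [idem_comm hj hi, idem_nle_absorb hi hj h]

end NleLemmas

section OrthLemmas

variable {S : Type u} [InverseMonoidWithZero S]

lemma orth_symm {a b : S} (h : Orth a b) : Orth b a := by
  obtain ⟨h1, h2⟩ := h
  constructor
  · rw [show b * a⁻¹ = (a * b⁻¹)⁻¹ from by rw [imw_mul_inv_rev, imw_inv_inv], h1, imw_zero_inv]
  · rw [show b⁻¹ * a = (a⁻¹ * b)⁻¹ from by rw [imw_mul_inv_rev, imw_inv_inv], h2, imw_zero_inv]

lemma orth_inv {a b : S} (h : Orth a b) : Orth a⁻¹ b⁻¹ := by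
  obtain ⟨h1, h2⟩ := h
  exact ⟨by rw [imw_inv_inv]; exact h2, by rw [imw_inv_inv]; exact h1⟩

lemma compat_of_orth {a b : S} (h : Orth a b) : Compat a b := by
  obtain ⟨h1, h2⟩ := h
  exact ⟨by rw [h1, imw_zero_mul], by rw [h2, imw_zero_mul]⟩

lemma orth_of_dom_ran {a b : S} (hd : (a⁻¹ * a) * (b⁻¹ * b) = 0)
    (hr : (a * a⁻¹) * (b * b⁻¹) = 0) : Orth a b := by
  constructor
  · calc a * b⁻¹ = (a * a⁻¹ * a) * (b⁻¹ * b * b⁻¹) := by rw [imw_mul_inv_mul, imw_inv_mul_inv]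
      _ = a * ((a⁻¹ * a) * (b⁻¹ * b)) * b⁻¹ := by simp only [mul_assoc]
      _ = 0 := by rw [hd, imw_mul_zero, imw_zero_mul]
  · calc a⁻¹ * b = (a⁻¹ * a * a⁻¹) * (b * b⁻¹ * b) := by rw [imw_inv_mul_inv, imw_mul_inv_mul]
      _ = a⁻¹ * (((a * a⁻¹) * (b * b⁻¹)) * b) := by simp only [mul_assoc]
      _ = 0 := by rw [hr, imw_zero_mul, imw_mul_zero]

lemma orth_idem {i j : S} (hi : i * i = i) (hj : j * j = j) (h : i * j = 0) : Orth i j := by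
  constructor
  · rw [idem_inv hj]; exact h
  · rw [idem_inv hi]; exact h

lemma orth_idem_mul {i j : S} (hi : i * i = i) (hj : j * j = j) (h : Orth i j) : i * j = 0 := by
  have := h.1
  rwa [idem_inv hj] at this

end OrthLemmas

section SupLemmas

variable {S : Type u} [DistributiveInverseMonoid S]

lemma le_bsup_left {a b : S} (h : Compat a b) : nle a (bsup a b) :=
  DistributiveInverseMonoid.le_sup_left a b h

lemma le_bsup_right {a b : S} (h : Compat a b) : nle b (bsup a b) :=
  DistributiveInverseMonoid.le_sup_right a b h

lemma bsup_le {a b c : S} (h : Compat a b) (h1 : nle a c) (h2 : nle b c) : nle (bsup a b) c :=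
  DistributiveInverseMonoid.sup_le a b c h h1 h2

lemma mul_bsup {a b : S} (c : S) (h : Compat a b) : c * bsup a b = bsup (c * a) (c * b) :=
  DistributiveInverseMonoid.mul_sup a b c h

lemma bsup_mul {a b : S} (c : S) (h : Compat a b) : bsup a b * c = bsup (a * c) (b * c) :=
  DistributiveInverseMonoid.sup_mul a b c h

lemma compat_zero (a : S) : Compat a (0 : S) := by
  constructor
  · rw [imw_zero_inv, imw_mul_zero, imw_mul_zero]
  · rw [imw_mul_zero, imw_zero_mul]

lemma zero_compat (a : S) : Compat (0 : S) a := by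
  constructor
  · rw [imw_zero_mul, imw_zero_mul]
  · rw [imw_zero_inv, imw_zero_mul, imw_zero_mul]

lemma bsup_zero (a : S) : bsup a (0 : S) = a := by
  apply nle_antisymm
  · exact bsup_le (compat_zero a) (nle_refl a) (nle_zero a)
  · exact le_bsup_left (compat_zero a)

lemma zero_bsup (a : S) : bsup (0 : S) a = a := by
  apply nle_antisymm
  · exact bsup_le (zero_compat a) (nle_zero a) (nle_refl a)
  · exact le_bsup_right (zero_compat a)

lemma bsup_inv {a b : S} (h : Orth a b) : (bsup a b)⁻¹ = bsup a⁻¹ b⁻¹ := by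
  have key : ∀ x y : S, Orth x y → nle (bsup x⁻¹ y⁻¹) (bsup x y)⁻¹ := by
    intro x y hxy
    exact bsup_le (compat_of_orth (orth_inv hxy))
      (nle_inv (le_bsup_left (compat_of_orth hxy)))
      (nle_inv (le_bsup_right (compat_of_orth hxy)))
  apply nle_antisymm _ (key a b h)
  have h2 := key a⁻¹ b⁻¹ (orth_inv h)
  rw [imw_inv_inv, imw_inv_inv] at h2
  have h3 := nle_inv h2
  rwa [imw_inv_inv] at h3

lemma bsup_comm {a b : S} (h : Orth a b) : bsup a b = bsup b a := by
  have hs := orth_symm h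
  apply nle_antisymm
  · exact bsup_le (compat_of_orth h) (le_bsup_right (compat_of_orth hs))
      (le_bsup_left (compat_of_orth hs))
  · exact bsup_le (compat_of_orth hs) (le_bsup_right (compat_of_orth h))
      (le_bsup_left (compat_of_orth h))

lemma ran_bsup {a b : S} (h : Orth a b) : bsup a b * (bsup a b)⁻¹ = bsup (a * a⁻¹) (b * b⁻¹) := by
  have hc := compat_of_orth h
  have hci := compat_of_orth (orth_inv h)
  rw [bsup_inv h, mul_bsup (bsup a b) hci, bsup_mul a⁻¹ hc, bsup_mul b⁻¹ hc,
    h.1, (orth_symm h).1, bsup_zero, zero_bsup]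

lemma dom_bsup {a b : S} (h : Orth a b) : (bsup a b)⁻¹ * bsup a b = bsup (a⁻¹ * a) (b⁻¹ * b) := by
  have h2 := ran_bsup (orth_inv h)
  rw [← bsup_inv h] at h2
  simp only [imw_inv_inv] at h2
  exact h2

lemma orth_bsup {a b c : S} (hab : Orth a b) (hac : Orth a c) (hbc : Orth b c) :
    Orth a (bsup b c) := by
  constructor
  · rw [bsup_inv hbc, mul_bsup _ (compat_of_orth (orth_inv hbc)), hab.1, hac.1, bsup_zero]
  · rw [mul_bsup _ (compat_of_orth hbc), hab.2, hac.2, bsup_zero]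

lemma bsup_orth {a b c : S} (hac : Orth a c) (hbc : Orth b c) (hab : Orth a b) :
    Orth (bsup a b) c := orth_symm (orth_bsup (orth_symm hac) (orth_symm hbc) hab)

lemma bsup_assoc3 {a b c : S} (hab : Orth a b) (hac : Orth a c) (hbc : Orth b c) :
    bsup a (bsup b c) = bsup (bsup a b) c := by
  have c_ab := compat_of_orth hab
  have c_ac := compat_of_orth hac
  have c_bc := compat_of_orth hbc
  have c_a_bc := compat_of_orth (orth_bsup hab hac hbc)
  have c_ab_c := compat_of_orth (bsup_orth hac hbc hab)
  apply nle_antisymm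
  · refine bsup_le c_a_bc ?_ (bsup_le c_bc ?_ ?_)
    · exact nle_trans (le_bsup_left c_ab) (le_bsup_left c_ab_c)
    · exact nle_trans (le_bsup_right c_ab) (le_bsup_left c_ab_c)
    · exact le_bsup_right c_ab_c
  · refine bsup_le c_ab_c (bsup_le c_ab ?_ ?_) ?_
    · exact le_bsup_left c_a_bc
    · exact nle_trans (le_bsup_left c_bc) (le_bsup_right c_a_bc)
    · exact nle_trans (le_bsup_right c_bc) (le_bsup_right c_a_bc)

end SupLemmas

section BoolLemmas

variable {S : Type u} [BooleanInverseMonoid S]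

lemma bcompl_idem {e : S} (he : e * e = e) : bcompl e * bcompl e = bcompl e :=
  BooleanInverseMonoid.compl_idem e he

lemma mul_bcompl {e : S} (he : e * e = e) : e * bcompl e = 0 :=
  BooleanInverseMonoid.mul_compl e he

lemma bsup_bcompl {e : S} (he : e * e = e) : bsup e (bcompl e) = 1 :=
  BooleanInverseMonoid.sup_compl e he

lemma bcompl_mul {e : S} (he : e * e = e) : bcompl e * e = 0 := by
  rw [idem_comm (bcompl_idem he) he, mul_bcompl he]

lemma orth_bcompl {e : S} (he : e * e = e) : Orth e (bcompl e) :=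
  orth_idem he (bcompl_idem he) (mul_bcompl he)

end BoolLemmas

section LemD

variable {S : Type u} [InverseMonoidWithZero S]

lemma ran_absorb_of_left {v F : S} (hF : F * F = F) (hv : F * v = v) :
    (v * v⁻¹) * F = v * v⁻¹ := by
  have h1 : F * (v * v⁻¹) = v * v⁻¹ := by
    have : F * v * v⁻¹ = v * v⁻¹ := by rw [hv]
    calc F * (v * v⁻¹) = F * v * v⁻¹ := by simp only [mul_assoc]
      _ = v * v⁻¹ := this
  rw [idem_comm (ridem v) hF, h1]

lemma dom_nle_of_absorb {u F : S} (hF : F * F = F) (hu : u * F = u) : nle (u⁻¹ * u) F := by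
  have h : u⁻¹ * u * F = u⁻¹ * u := by
    calc u⁻¹ * u * F = u⁻¹ * (u * F) := by simp only [mul_assoc]
      _ = u⁻¹ * u := by rw [hu]
  exact idem_nle_of_absorb (didem u) h

lemma lemD (h0 : ZeroSimple S) {E F : S} (hE : E * E = E) (hF : F * F = F) (hFne : F ≠ 0) :
    ∃ s : S, s * s⁻¹ = E ∧ nle (s⁻¹ * s) F := by
  classical
  set I : Set S := {x | ∃ a b : S, x = a * F * b} with hIdef
  have hFI : F ∈ I := ⟨1, 1, by rw [one_mul, mul_one]⟩
  have hI : IsMIdeal I := by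
    refine ⟨⟨F, hFI⟩, ?_⟩
    rintro x ⟨a, b, hx⟩ s
    exact ⟨⟨s * a, b, by rw [hx]; simp only [mul_assoc]⟩,
      ⟨a, b * s, by rw [hx]; simp only [mul_assoc]⟩⟩
  rcases h0.2 I hI with h | h
  · exfalso; apply hFne; have := h ▸ hFI; simpa using this
  · have hEI : E ∈ I := h ▸ Set.mem_univ E
    obtain ⟨a, b, hab⟩ := hEI
    set u : S := E * a * F with hu
    set v : S := F * b * E with hv
    have huv : u * v = E := by
      calc u * v = E * (a * ((F * F) * (b * E))) := by rw [hu, hv]; simp only [mul_assoc]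
        _ = E * (a * (F * (b * E))) := by rw [hF]
        _ = E * ((a * F * b) * E) := by simp only [mul_assoc]
        _ = E * (E * E) := by rw [← hab]
        _ = E := by rw [hE, hE]
    have hFv : F * v = v := by
      calc F * v = (F * F) * (b * E) := by rw [hv]; simp only [mul_assoc]
        _ = F * b * E := by rw [hF]; simp only [mul_assoc]
        _ = v := by rw [hv]
    have hvvF : (v * v⁻¹) * F = v * v⁻¹ := ran_absorb_of_left hF hFv
    refine ⟨u * (v * v⁻¹), ?_, ?_⟩
    · have hsinv : (u * (v * v⁻¹))⁻¹ = (v * v⁻¹) * u⁻¹ := by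
        rw [imw_mul_inv_rev, idem_inv (ridem v)]
      calc u * (v * v⁻¹) * (u * (v * v⁻¹))⁻¹
          = u * (v * v⁻¹) * ((v * v⁻¹) * u⁻¹) := by rw [hsinv]
        _ = u * (((v * v⁻¹) * (v * v⁻¹)) * u⁻¹) := by simp only [mul_assoc]
        _ = u * ((v * v⁻¹) * u⁻¹) := by rw [ridem]
        _ = (u * v) * (v⁻¹ * u⁻¹) := by simp only [mul_assoc]
        _ = (u * v) * (u * v)⁻¹ := by rw [show (u * v)⁻¹ = v⁻¹ * u⁻¹ from imw_mul_inv_rev u v]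
        _ = E * E⁻¹ := by rw [huv]
        _ = E := by rw [idem_inv hE, hE]
    · apply dom_nle_of_absorb hF
      calc u * (v * v⁻¹) * F = u * ((v * v⁻¹) * F) := by simp only [mul_assoc]
        _ = u * (v * v⁻¹) := by rw [hvvF]

end LemD

section ConjLemmas

variable {S : Type u} [InverseMonoidWithZero S]

lemma conj_idem {t i : S} (htt : t⁻¹ * t = 1) (hi : i * i = i) :
    (t * i * t⁻¹) * (t * i * t⁻¹) = t * i * t⁻¹ := by
  calc (t * i * t⁻¹) * (t * i * t⁻¹)
      = t * (i * ((t⁻¹ * t) * (i * t⁻¹))) := by simp only [mul_assoc]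
    _ = t * (i * (i * t⁻¹)) := by rw [htt, one_mul]
    _ = t * (i * i) * t⁻¹ := by simp only [mul_assoc]
    _ = t * i * t⁻¹ := by rw [hi]

end ConjLemmas
/-- In a 0-simple Tarski monoid, for idempotents `e ≠ 1` and
`f ≠ 0` there is a unit `g` with `g e g⁻¹ ≤ f`. -/
theorem statement18 (S : Type u) [BooleanInverseMeetMonoid S] [Countable S]
    (hat : IdemAtomless S) (h0 : ZeroSimple S)
    (e f : S) (he : e * e = e) (hf : f * f = f) (hne : e ≠ 1) (hnf : f ≠ 0) :
    ∃ g : S, IsUnit g ∧ nle (g * e * g⁻¹) f := by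
  have hone : (1 : S) * 1 = 1 := one_mul 1
  -- an element `t` with `t⁻¹ t = 1` and range `p = t t⁻¹ ≤ f`
  obtain ⟨s, hs1, hs2⟩ := lemD h0 hone hf hnf
  obtain ⟨t, ht⟩ : ∃ x : S, x = s⁻¹ := ⟨_, rfl⟩
  have htt : t⁻¹ * t = 1 := by rw [ht, imw_inv_inv]; exact hs1
  obtain ⟨p, hp⟩ : ∃ x : S, x = t * t⁻¹ := ⟨_, rfl⟩
  have hpi : p * p = p := by rw [hp]; exact ridem t
  have hpf : nle p f := by rw [hp, ht, imw_inv_inv]; exact hs2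
  obtain ⟨q, hq⟩ : ∃ x : S, x = bcompl p := ⟨_, rfl⟩
  have hqi : q * q = q := by rw [hq]; exact bcompl_idem hpi
  have hpq : p * q = 0 := by rw [hq]; exact mul_bcompl hpi
  have hsuppq : bsup p q = 1 := by rw [hq]; exact bsup_bcompl hpi
  -- the complement of e
  obtain ⟨eC, heC⟩ : ∃ x : S, x = bcompl e := ⟨_, rfl⟩
  have heCi : eC * eC = eC := by rw [heC]; exact bcompl_idem he
  have heeC : e * eC = 0 := by rw [heC]; exact mul_bcompl he
  have hsupeeC : bsup e eC = 1 := by rw [heC]; exact bsup_bcompl he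
  have heCne : eC ≠ 0 := by
    intro h
    apply hne
    rw [h, bsup_zero] at hsupeeC
    exact hsupeeC
  -- m = t eC t⁻¹
  obtain ⟨m, hm⟩ : ∃ x : S, x = t * eC * t⁻¹ := ⟨_, rfl⟩
  have hmi : m * m = m := by rw [hm]; exact conj_idem htt heCi
  have hrecover : t⁻¹ * m * t = eC := by
    rw [hm]
    calc t⁻¹ * (t * eC * t⁻¹) * t = (t⁻¹ * t) * eC * (t⁻¹ * t) := by simp only [mul_assoc]
      _ = eC := by rw [htt, one_mul, mul_one]
  have hmne : m ≠ 0 := by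
    intro h
    apply heCne
    rw [← hrecover, h, imw_mul_zero, imw_zero_mul]
  have hmp : m * p = m := by
    rw [hm, hp]
    calc (t * eC * t⁻¹) * (t * t⁻¹) = t * (eC * ((t⁻¹ * t) * t⁻¹)) := by simp only [mul_assoc]
      _ = t * (eC * t⁻¹) := by rw [htt, one_mul]
      _ = t * eC * t⁻¹ := by simp only [mul_assoc]
  have hmq : m * q = 0 := by
    calc m * q = (m * p) * q := by rw [hmp]
      _ = m * (p * q) := by simp only [mul_assoc]
      _ = 0 := by rw [hpq, imw_mul_zero]
  have htinvp : t⁻¹ * p = t⁻¹ := by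
    rw [hp]
    calc t⁻¹ * (t * t⁻¹) = t⁻¹ * t * t⁻¹ := by simp only [mul_assoc]
      _ = t⁻¹ := imw_inv_mul_inv t
  have htinvq : t⁻¹ * q = 0 := by
    calc t⁻¹ * q = (t⁻¹ * p) * q := by rw [htinvp]
      _ = t⁻¹ * (p * q) := by simp only [mul_assoc]
      _ = 0 := by rw [hpq, imw_mul_zero]
  -- an element `u` with `u⁻¹ u = 1` and range `r = u u⁻¹ ≤ m`
  obtain ⟨s₂, hs₂1, hs₂2⟩ := lemD h0 hone hmi hmne
  obtain ⟨u, hu⟩ : ∃ x : S, x = s₂⁻¹ := ⟨_, rfl⟩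
  have huu : u⁻¹ * u = 1 := by rw [hu, imw_inv_inv]; exact hs₂1
  obtain ⟨r, hr⟩ : ∃ x : S, x = u * u⁻¹ := ⟨_, rfl⟩
  have hri : r * r = r := by rw [hr]; exact ridem u
  have hrm : nle r m := by rw [hr, hu, imw_inv_inv]; exact hs₂2
  have hrm' : r * m = r := idem_nle_absorb hri hmi hrm
  have hrq : r * q = 0 := by
    calc r * q = (r * m) * q := by rw [hrm']
      _ = r * (m * q) := by simp only [mul_assoc]
      _ = 0 := by rw [hmq, imw_mul_zero]
  -- w = t u⁻¹ : a bijection from r to p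
  obtain ⟨w, hw⟩ : ∃ x : S, x = t * u⁻¹ := ⟨_, rfl⟩
  have hwd : w⁻¹ * w = r := by
    rw [hw, hr]
    calc (t * u⁻¹)⁻¹ * (t * u⁻¹) = (u⁻¹⁻¹ * t⁻¹) * (t * u⁻¹) := by rw [imw_mul_inv_rev]
      _ = u * ((t⁻¹ * t) * u⁻¹) := by rw [imw_inv_inv]; simp only [mul_assoc]
      _ = u * u⁻¹ := by rw [htt, one_mul]
  have hwr : w * w⁻¹ = p := by
    rw [hw, hp]
    calc (t * u⁻¹) * (t * u⁻¹)⁻¹ = (t * u⁻¹) * (u⁻¹⁻¹ * t⁻¹) := by rw [imw_mul_inv_rev]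
      _ = t * ((u⁻¹ * u) * t⁻¹) := by rw [imw_inv_inv]; simp only [mul_assoc]
      _ = t * t⁻¹ := by rw [huu, one_mul]
  have horth_wq : Orth w q := by
    apply orth_of_dom_ran
    · rw [hwd, idem_inv hqi, hqi, hrq]
    · rw [hwr, idem_inv hqi, hqi, hpq]
  -- δ = w ∨ q : a bijection from r ∨ q onto 1
  obtain ⟨δ, hδ⟩ : ∃ x : S, x = bsup w q := ⟨_, rfl⟩
  have hδd : δ⁻¹ * δ = bsup r q := by rw [hδ, dom_bsup horth_wq, hwd, idem_inv hqi, hqi]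
  have hδr : δ * δ⁻¹ = 1 := by rw [hδ, ran_bsup horth_wq, hwr, idem_inv hqi, hqi, hsuppq]
  -- c = u δ : a bijection from r ∨ q onto r
  obtain ⟨c, hc⟩ : ∃ x : S, x = u * δ := ⟨_, rfl⟩
  have hcd : c⁻¹ * c = bsup r q := by
    rw [hc]
    calc (u * δ)⁻¹ * (u * δ) = (δ⁻¹ * u⁻¹) * (u * δ) := by rw [imw_mul_inv_rev]
      _ = δ⁻¹ * ((u⁻¹ * u) * δ) := by simp only [mul_assoc]
      _ = δ⁻¹ * δ := by rw [huu, one_mul]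
      _ = bsup r q := hδd
  have hcr : c * c⁻¹ = r := by
    rw [hc, hr]
    calc (u * δ) * (u * δ)⁻¹ = (u * δ) * (δ⁻¹ * u⁻¹) := by rw [imw_mul_inv_rev]
      _ = u * ((δ * δ⁻¹) * u⁻¹) := by simp only [mul_assoc]
      _ = u * u⁻¹ := by rw [hδr, one_mul]
  -- n = m ∧ ¬r
  obtain ⟨n, hn⟩ : ∃ x : S, x = m * bcompl r := ⟨_, rfl⟩
  have hni : n * n = n := by rw [hn]; exact idem_mul_idem hmi (bcompl_idem hri)
  have hnr : n * r = 0 := by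
    rw [hn]
    calc (m * bcompl r) * r = m * (bcompl r * r) := by simp only [mul_assoc]
      _ = 0 := by rw [bcompl_mul hri, imw_mul_zero]
  have hnq : n * q = 0 := by
    rw [hn]
    calc (m * bcompl r) * q = m * (bcompl r * q) := by simp only [mul_assoc]
      _ = m * (q * bcompl r) := by rw [idem_comm (bcompl_idem hri) hqi]
      _ = (m * q) * bcompl r := by simp only [mul_assoc]
      _ = 0 := by rw [hmq, imw_zero_mul]
  have hmr : m * r = r := idem_absorb_left hri hmi hrm
  have orth_nr : Orth n r := orth_idem hni hri hnr
  have orth_nq : Orth n q := orth_idem hni hqi hnq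
  have orth_rq : Orth r q := orth_idem hri hqi hrq
  have hβranm : bsup n r = m := by
    have hmsplit : m = bsup r n := by
      conv_lhs => rw [← mul_one m, ← bsup_bcompl hri]
      rw [mul_bsup m (compat_of_orth (orth_bcompl hri)), hmr, ← hn]
    rw [bsup_comm orth_nr]
    exact hmsplit.symm
  -- β = n ∨ c : a bijection from m ∨ q onto m
  have horth_nc : Orth n c := by
    apply orth_of_dom_ran
    · rw [idem_inv hni, hni, hcd, mul_bsup n (compat_of_orth orth_rq), hnr, hnq, bsup_zero]
    · rw [idem_inv hni, hni, hcr, hnr]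
  obtain ⟨β, hβ⟩ : ∃ x : S, x = bsup n c := ⟨_, rfl⟩
  have hβr : β * β⁻¹ = m := by
    rw [hβ, ran_bsup horth_nc, idem_inv hni, hni, hcr]
    exact hβranm
  have hβd : β⁻¹ * β = bsup m q := by
    rw [hβ, dom_bsup horth_nc, idem_inv hni, hni, hcd,
      bsup_assoc3 orth_nr orth_nq orth_rq, hβranm]
  -- a = t e : a bijection from e onto e₁ = t e t⁻¹ ≤ f
  obtain ⟨a, ha⟩ : ∃ x : S, x = t * e := ⟨_, rfl⟩
  obtain ⟨e₁, he₁⟩ : ∃ x : S, x = t * e * t⁻¹ := ⟨_, rfl⟩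
  have he₁i : e₁ * e₁ = e₁ := by rw [he₁]; exact conj_idem htt he
  have hada : a⁻¹ * a = e := by
    rw [ha]
    calc (t * e)⁻¹ * (t * e) = (e⁻¹ * t⁻¹) * (t * e) := by rw [imw_mul_inv_rev]
      _ = e⁻¹ * ((t⁻¹ * t) * e) := by simp only [mul_assoc]
      _ = e⁻¹ * e := by rw [htt, one_mul]
      _ = e := by rw [idem_inv he, he]
  have hara : a * a⁻¹ = e₁ := by
    rw [ha, he₁]
    calc (t * e) * (t * e)⁻¹ = (t * e) * (e⁻¹ * t⁻¹) := by rw [imw_mul_inv_rev]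
      _ = (t * e) * (e * t⁻¹) := by rw [idem_inv he]
      _ = t * ((e * e) * t⁻¹) := by simp only [mul_assoc]
      _ = t * e * t⁻¹ := by rw [he]; simp only [mul_assoc]
  have he₁p : e₁ * p = e₁ := by
    rw [he₁, hp]
    calc (t * e * t⁻¹) * (t * t⁻¹) = t * (e * ((t⁻¹ * t) * t⁻¹)) := by simp only [mul_assoc]
      _ = t * (e * t⁻¹) := by rw [htt, one_mul]
      _ = t * e * t⁻¹ := by simp only [mul_assoc]
  have he₁f : nle e₁ f := nle_trans (idem_nle_of_absorb he₁i he₁p) hpf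
  have he₁q : e₁ * q = 0 := by
    rw [he₁]
    calc (t * e * t⁻¹) * q = (t * e) * (t⁻¹ * q) := by simp only [mul_assoc]
      _ = 0 := by rw [htinvq, imw_mul_zero]
  have he₁m : e₁ * m = 0 := by
    rw [he₁, hm]
    calc (t * e * t⁻¹) * (t * eC * t⁻¹)
        = t * (e * ((t⁻¹ * t) * (eC * t⁻¹))) := by simp only [mul_assoc]
      _ = t * (e * (eC * t⁻¹)) := by rw [htt, one_mul]
      _ = t * (e * eC) * t⁻¹ := by simp only [mul_assoc]
      _ = 0 := by rw [heeC, imw_mul_zero, imw_zero_mul]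
  -- b = β⁻¹ t eC : a bijection from eC onto m ∨ q
  obtain ⟨b, hb⟩ : ∃ x : S, x = β⁻¹ * (t * eC) := ⟨_, rfl⟩
  have heCinv : eC⁻¹ = eC := idem_inv heCi
  have hbinv : b⁻¹ = (eC * t⁻¹) * β := by
    rw [hb, imw_mul_inv_rev, imw_mul_inv_rev, imw_inv_inv, heCinv]
  have hbdb : b⁻¹ * b = eC := by
    rw [hbinv, hb]
    calc ((eC * t⁻¹) * β) * (β⁻¹ * (t * eC))
        = eC * (t⁻¹ * ((β * β⁻¹) * (t * eC))) := by simp only [mul_assoc]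
      _ = eC * (t⁻¹ * (m * (t * eC))) := by rw [hβr]
      _ = eC * (t⁻¹ * ((t * eC * t⁻¹) * (t * eC))) := by rw [hm]
      _ = eC * ((t⁻¹ * t) * (eC * ((t⁻¹ * t) * eC))) := by simp only [mul_assoc]
      _ = eC * (eC * eC) := by rw [htt, one_mul, one_mul]
      _ = eC := by rw [heCi, heCi]
  have hbrb : b * b⁻¹ = bsup m q := by
    rw [hbinv, hb]
    calc (β⁻¹ * (t * eC)) * ((eC * t⁻¹) * β)
        = β⁻¹ * ((t * (eC * eC) * t⁻¹) * β) := by simp only [mul_assoc]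
      _ = β⁻¹ * ((t * eC * t⁻¹) * β) := by rw [heCi]
      _ = β⁻¹ * (m * β) := by rw [← hm]
      _ = β⁻¹ * ((β * β⁻¹) * β) := by rw [hβr]
      _ = (β⁻¹ * β) * (β⁻¹ * β) := by simp only [mul_assoc]
      _ = β⁻¹ * β := didem β
      _ = bsup m q := hβd
  -- g = a ∨ b is the required unit
  have orth_mq : Orth m q := orth_idem hmi hqi hmq
  have horth_ab : Orth a b := by
    apply orth_of_dom_ran
    · rw [hada, hbdb, heeC]
    · rw [hara, hbrb, mul_bsup e₁ (compat_of_orth orth_mq), he₁m, he₁q, bsup_zero]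
  have hgd : (bsup a b)⁻¹ * bsup a b = 1 := by
    rw [dom_bsup horth_ab, hada, hbdb, hsupeeC]
  have hted : (t * e)⁻¹ * (t * e) = e := by rw [← ha]; exact hada
  have hter : (t * e) * (t * e)⁻¹ = e₁ := by rw [← ha]; exact hara
  have hteCd : (t * eC)⁻¹ * (t * eC) = eC := by
    calc (t * eC)⁻¹ * (t * eC) = (eC⁻¹ * t⁻¹) * (t * eC) := by rw [imw_mul_inv_rev]
      _ = eC⁻¹ * ((t⁻¹ * t) * eC) := by simp only [mul_assoc]
      _ = eC⁻¹ * eC := by rw [htt, one_mul]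
      _ = eC := by rw [heCinv, heCi]
  have hteCr : (t * eC) * (t * eC)⁻¹ = m := by
    rw [hm]
    calc (t * eC) * (t * eC)⁻¹ = (t * eC) * (eC⁻¹ * t⁻¹) := by rw [imw_mul_inv_rev]
      _ = (t * eC) * (eC * t⁻¹) := by rw [heCinv]
      _ = t * ((eC * eC) * t⁻¹) := by simp only [mul_assoc]
      _ = t * eC * t⁻¹ := by rw [heCi]; simp only [mul_assoc]
  have horth_te_teC : Orth (t * e) (t * eC) := by
    apply orth_of_dom_ran
    · rw [hted, hteCd, heeC]
    · rw [hter, hteCr, he₁m]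
  have hpsplit : p = bsup e₁ m := by
    calc p = t * t⁻¹ := hp
      _ = t * 1 * t⁻¹ := by rw [mul_one]
      _ = t * bsup e eC * t⁻¹ := by rw [hsupeeC]
      _ = bsup (t * e) (t * eC) * t⁻¹ := by
          rw [mul_bsup t (compat_of_orth (orth_idem he heCi heeC))]
      _ = bsup ((t * e) * t⁻¹) ((t * eC) * t⁻¹) := by
          rw [bsup_mul t⁻¹ (compat_of_orth horth_te_teC)]
      _ = bsup e₁ m := by rw [show (t * e) * t⁻¹ = e₁ from he₁.symm, show (t * eC) * t⁻¹ = m from hm.symm]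
  have orth_e₁m : Orth e₁ m := orth_idem he₁i hmi he₁m
  have orth_e₁q : Orth e₁ q := orth_idem he₁i hqi he₁q
  have hgr : bsup a b * (bsup a b)⁻¹ = 1 := by
    rw [ran_bsup horth_ab, hara, hbrb, bsup_assoc3 orth_e₁m orth_e₁q orth_mq, ← hpsplit,
      hsuppq]
  have hunit : IsUnit (bsup a b) := ⟨⟨bsup a b, (bsup a b)⁻¹, hgr, hgd⟩, rfl⟩
  have hae : a * e = a := by
    rw [ha]
    calc (t * e) * e = t * (e * e) := by simp only [mul_assoc]
      _ = t * e := by rw [he]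
  have hbe : b * e = 0 := by
    rw [hb]
    calc (β⁻¹ * (t * eC)) * e = β⁻¹ * (t * (eC * e)) := by simp only [mul_assoc]
      _ = β⁻¹ * (t * (e * eC)) := by rw [idem_comm heCi he]
      _ = 0 := by rw [heeC, imw_mul_zero, imw_mul_zero]
  have hge : bsup a b * e = a := by
    rw [bsup_mul e (compat_of_orth horth_ab), hae, hbe, bsup_zero]
  have hfinal : bsup a b * e * (bsup a b)⁻¹ = e₁ := by
    calc bsup a b * e * (bsup a b)⁻¹ = a * (bsup a b)⁻¹ := by rw [hge]
      _ = a * bsup a⁻¹ b⁻¹ := by rw [bsup_inv horth_ab]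
      _ = bsup (a * a⁻¹) (a * b⁻¹) := by rw [mul_bsup a (compat_of_orth (orth_inv horth_ab))]
      _ = bsup e₁ 0 := by rw [hara, horth_ab.1]
      _ = e₁ := bsup_zero e₁
  exact ⟨bsup a b, hunit, by rw [hfinal]; exact he₁f⟩
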